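/- Let A_I be an r×n real matrix with A_I A_Iᵀ = I_r, set Σ := I_n − A_Iᵀ A_I, let a ∈ ℝⁿ with aᵀΣa ≠ 0, and let B be the (r+1)×n matrix obtained by appending the row aᵀ below A_I. Then the (r+1)×(r+1) matrix B Bᵀ is invertible and I_n − Bᵀ (B Bᵀ)⁻¹ B = Σ (I_n − (aᵀΣa)⁻¹ a aᵀ) Σ, where a aᵀ denotes the n×n outer product matrix. -/

import Mathlib

open Matrix

/-- The matrix `B` obtained by appending the row `aᵀ` below the `r × n` matrix `A`. -/
def appendRow {r n : ℕ} (A : Matrix (Fin r) (Fin n) ℝ) (a : Fin n → ℝ) :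
    Matrix (Fin (r + 1)) (Fin n) ℝ :=
  Matrix.of fun i j => Fin.lastCases (a j) (fun k => A k j) i

lemma rowMat_mul_mul {n : ℕ} (X : Matrix (Fin n) (Fin n) ℝ) (a : Fin n → ℝ) :
    (Matrix.of fun (_ : Fin 1) j => a j) * X * (Matrix.of fun (_ : Fin 1) j => a j).transpose
      = (a ⬝ᵥ X.mulVec a) • (1 : Matrix (Fin 1) (Fin 1) ℝ) := by
  ext i j
  fin_cases i; fin_cases j
  simp only [Matrix.mul_apply, Matrix.transpose_apply, Matrix.of_apply, Matrix.smul_apply,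
    Matrix.one_apply_eq, smul_eq_mul, mul_one, dotProduct, Matrix.mulVec, Finset.sum_mul,
    Finset.mul_sum]
  rw [Finset.sum_comm]
  exact Finset.sum_congr rfl fun _ _ => Finset.sum_congr rfl fun _ _ => by ring

lemma key_alg {n : ℕ} (P Q : Matrix (Fin n) (Fin n) ℝ) (hP : P * P = P) (c : ℝ) :
    (1 : Matrix (Fin n) (Fin n) ℝ)
        - (P + c • (P * Q * P) - c • (Q * P) - c • (P * Q) + c • Q)
      = (1 - P) * (1 - c • Q) * (1 - P) := by
  simp only [Matrix.mul_sub, Matrix.sub_mul, Matrix.mul_smul, Matrix.smul_mul, Matrix.one_mul,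
    Matrix.mul_one, hP]
  module

theorem hsJacobian_formula_nondegenerate {r n : ℕ}
    (A : Matrix (Fin r) (Fin n) ℝ) (hA : A * A.transpose = 1) (a : Fin n → ℝ)
    (hne : a ⬝ᵥ ((1 - A.transpose * A).mulVec a) ≠ 0) :
    IsUnit (appendRow A a * (appendRow A a).transpose) ∧
    (1 : Matrix (Fin n) (Fin n) ℝ) -
        (appendRow A a).transpose * (appendRow A a * (appendRow A a).transpose)⁻¹ *
          appendRow A a =
      (1 - A.transpose * A) *
        (1 - (a ⬝ᵥ ((1 - A.transpose * A).mulVec a))⁻¹ • Matrix.vecMulVec a a) *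
        (1 - A.transpose * A) := by
  classical
  set t : ℝ := a ⬝ᵥ ((1 - A.transpose * A).mulVec a) with ht
  obtain ⟨B₂, hB₂⟩ : ∃ B₂ : Matrix (Fin 1) (Fin n) ℝ, B₂ = Matrix.of fun _ j => a j := ⟨_, rfl⟩
  obtain ⟨C, hC⟩ : ∃ C : Matrix (Fin r) (Fin 1) ℝ, C = A * B₂.transpose := ⟨_, rfl⟩
  have hCt : C.transpose = B₂ * A.transpose := by
    rw [hC, Matrix.transpose_mul, Matrix.transpose_transpose]
  have hS : B₂ * B₂.transpose = C.transpose * C + t • 1 := by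
    have h1 : B₂ * (1 - A.transpose * A) * B₂.transpose = t • 1 := by
      rw [hB₂, ht]; exact rowMat_mul_mul _ a
    have h2 : B₂ * (1 - A.transpose * A) * B₂.transpose
        = B₂ * B₂.transpose - C.transpose * C := by
      rw [hCt, hC, Matrix.mul_sub, Matrix.mul_one, Matrix.sub_mul,
        ← Matrix.mul_assoc B₂ A.transpose A, Matrix.mul_assoc (B₂ * A.transpose) A B₂.transpose]
    exact sub_eq_iff_eq_add'.mp (h2.symm.trans h1)
  obtain ⟨N, hN⟩ : ∃ N : Matrix (Fin r ⊕ Fin 1) (Fin r ⊕ Fin 1) ℝ,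
      N = Matrix.fromBlocks (1 + t⁻¹ • (C * C.transpose)) (-(t⁻¹ • C)) (-(t⁻¹ • C.transpose))
        (t⁻¹ • (1 : Matrix (Fin 1) (Fin 1) ℝ)) := ⟨_, rfl⟩
  obtain ⟨M, hM⟩ : ∃ M : Matrix (Fin r ⊕ Fin 1) (Fin r ⊕ Fin 1) ℝ,
      M = Matrix.fromBlocks 1 C C.transpose (B₂ * B₂.transpose) := ⟨_, rfl⟩
  have e11 : (1 : Matrix (Fin r) (Fin r) ℝ) * (1 + t⁻¹ • (C * C.transpose))
      + C * (-(t⁻¹ • C.transpose)) = 1 := by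
    rw [Matrix.one_mul, Matrix.mul_neg, Matrix.mul_smul]
    abel
  have e12 : (1 : Matrix (Fin r) (Fin r) ℝ) * (-(t⁻¹ • C))
      + C * (t⁻¹ • (1 : Matrix (Fin 1) (Fin 1) ℝ)) = 0 := by
    rw [Matrix.one_mul, Matrix.mul_smul, Matrix.mul_one]
    abel
  have e21 : C.transpose * (1 + t⁻¹ • (C * C.transpose))
      + (B₂ * B₂.transpose) * (-(t⁻¹ • C.transpose)) = 0 := by
    rw [hS]
    have ha : C.transpose * (C * C.transpose) = (C.transpose * C) * C.transpose :=
      (Matrix.mul_assoc _ _ _).symm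
    simp only [Matrix.mul_add, Matrix.mul_one, Matrix.mul_smul, Matrix.mul_neg,
      Matrix.add_mul, Matrix.smul_mul, Matrix.one_mul, ha, smul_smul,
      mul_inv_cancel₀ hne, one_smul]
    match_scalars <;> field_simp <;> ring
  have e22 : C.transpose * (-(t⁻¹ • C))
      + (B₂ * B₂.transpose) * (t⁻¹ • (1 : Matrix (Fin 1) (Fin 1) ℝ)) = 1 := by
    rw [hS]
    simp only [Matrix.mul_neg, Matrix.mul_smul, Matrix.add_mul, Matrix.smul_mul,
      Matrix.mul_one, Matrix.one_mul, smul_smul, mul_inv_cancel₀ hne, one_smul]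
    match_scalars <;> field_simp <;> ring
  have hMN : M * N = 1 := by
    rw [hM, hN, Matrix.fromBlocks_multiply, e11, e12, e21, e22, Matrix.fromBlocks_one]
  set e : (Fin r ⊕ Fin 1) ≃ Fin (r + 1) := finSumFinEquiv with he
  have hsub : (appendRow A a).submatrix ⇑e id = Matrix.fromRows A B₂ := by
    ext i j
    rcases i with k | k
    · show appendRow A a (e (Sum.inl k)) j = A k j
      have h : e (Sum.inl k) = Fin.castSucc k := rfl
      rw [h]
      simp [appendRow]
    · show appendRow A a (e (Sum.inr k)) j = B₂ k j
      have hk : k = 0 := Subsingleton.elim _ _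
      have h : e (Sum.inr k) = Fin.last r := by
        subst hk
        apply Fin.ext
        simp [he]
      rw [h, hB₂]
      simp [appendRow]
  have hB : appendRow A a = (Matrix.fromRows A B₂).submatrix ⇑e.symm id := by
    rw [← hsub, Matrix.submatrix_submatrix]
    have h1 : ⇑e ∘ ⇑e.symm = id := by
      funext x; simp
    rw [h1, Function.id_comp, Matrix.submatrix_id_id]
  have hBB : appendRow A a * (appendRow A a).transpose = M.submatrix ⇑e.symm ⇑e.symm := by
    rw [hB, Matrix.transpose_submatrix]
    have h2 := Matrix.submatrix_mul_equiv (Matrix.fromRows A B₂) (Matrix.fromRows A B₂).transpose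
      ⇑e.symm (Equiv.refl (Fin n)) ⇑e.symm
    simp only [Equiv.coe_refl] at h2
    rw [h2, hM, Matrix.transpose_fromRows, Matrix.fromRows_mul_fromCols, hA, ← hCt, ← hC]
  have hMinv : Invertible M := invertibleOfRightInverse M N hMN
  have hMunit : IsUnit M := isUnit_of_invertible M
  refine ⟨by rw [hBB]; exact (Matrix.isUnit_submatrix_equiv _ _).mpr hMunit, ?_⟩
  have hinv : (appendRow A a * (appendRow A a).transpose)⁻¹ = N.submatrix ⇑e.symm ⇑e.symm := by
    rw [hBB, Matrix.inv_submatrix_equiv, Matrix.inv_eq_right_inv hMN]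
  rw [hinv, hB, Matrix.transpose_submatrix,
    Matrix.submatrix_mul_equiv (Matrix.fromRows A B₂).transpose N id e.symm ⇑e.symm,
    Matrix.submatrix_mul_equiv ((Matrix.fromRows A B₂).transpose * N) (Matrix.fromRows A B₂)
      id e.symm id,
    Matrix.submatrix_id_id]
  have hQ : Matrix.vecMulVec a a = B₂.transpose * B₂ := by
    ext i j
    simp [Matrix.vecMulVec, Matrix.mul_apply, hB₂, Fin.sum_univ_one]
  have hP : (A.transpose * A) * (A.transpose * A) = A.transpose * A := by
    rw [Matrix.mul_assoc, ← Matrix.mul_assoc A, hA, Matrix.one_mul]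
  rw [hQ, ← key_alg (A.transpose * A) (B₂.transpose * B₂) hP t⁻¹]
  congr 1
  rw [hN, Matrix.transpose_fromRows, Matrix.fromCols_mul_fromBlocks,
    Matrix.fromCols_mul_fromRows, hC]
  simp only [Matrix.transpose_mul, Matrix.transpose_transpose, Matrix.mul_add, Matrix.add_mul, Matrix.mul_one, Matrix.one_mul, Matrix.mul_neg,
    Matrix.neg_mul, Matrix.mul_smul, Matrix.smul_mul, Matrix.mul_assoc]
  module
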